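/- Let P → Q be an injective homomorphism of finitely generated abelian groups. Then there is an isomorphism of rings ℤ[Q] ⊗_{ℤ[P]} ℤ[Q] ≅ ℤ[Q] ⊗_ℤ ℤ[Q/P], where ℤ[−] denotes the group algebra and Q/P is the cokernel of P → Q. In particular, if Q/P is finite, then ℤ[Q] ⊗_{ℤ[P]} ℤ[Q] is a finite free module over ℤ[Q]. -/

import Mathlib

open TensorProduct

set_option maxHeartbeats 2000000
set_option synthInstance.maxHeartbeats 400000

/-- Let `P → Q` be an injective homomorphism of finitely generated
abelian groups.  Then `ℤ[Q] ⊗_{ℤ[P]} ℤ[Q] ≅ ℤ[Q] ⊗_ℤ ℤ[Q/P]` as rings, the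
isomorphism being induced by `(x, y) ↦ (x·y, ȳ)` on group elements.  In
particular, if `Q/P` is finite then `ℤ[Q] ⊗_{ℤ[P]} ℤ[Q]` is a finite free
module over `ℤ[Q]` (via the left factor). -/
theorem stmt5 {P Q : Type*} [AddCommGroup P] [AddCommGroup Q]
    [AddGroup.FG P] [AddGroup.FG Q]
    (f : P →+ Q) (hf : Function.Injective f) :
    letI : Algebra (AddMonoidAlgebra ℤ P) (AddMonoidAlgebra ℤ Q) :=
      (AddMonoidAlgebra.mapDomainRingHom ℤ f).toAlgebra
    ∃ e : (TensorProduct (AddMonoidAlgebra ℤ P)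
            (AddMonoidAlgebra ℤ Q) (AddMonoidAlgebra ℤ Q)) ≃+*
          (TensorProduct ℤ (AddMonoidAlgebra ℤ Q)
            (AddMonoidAlgebra ℤ (Q ⧸ f.range))),
      (∀ x y : Q,
        e (AddMonoidAlgebra.single x 1 ⊗ₜ AddMonoidAlgebra.single y 1) =
          AddMonoidAlgebra.single (x + y) 1 ⊗ₜ
            AddMonoidAlgebra.single (QuotientAddGroup.mk' f.range y) 1) ∧
      (Finite (Q ⧸ f.range) →
        Module.Finite (AddMonoidAlgebra ℤ Q)
          (TensorProduct (AddMonoidAlgebra ℤ P)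
            (AddMonoidAlgebra ℤ Q) (AddMonoidAlgebra ℤ Q)) ∧
        Module.Free (AddMonoidAlgebra ℤ Q)
          (TensorProduct (AddMonoidAlgebra ℤ P)
            (AddMonoidAlgebra ℤ Q) (AddMonoidAlgebra ℤ Q))) := by
  letI : Algebra (AddMonoidAlgebra ℤ P) (AddMonoidAlgebra ℤ Q) :=
    (AddMonoidAlgebra.mapDomainRingHom ℤ f).toAlgebra
  have halg : ∀ p : P, algebraMap (AddMonoidAlgebra ℤ P) (AddMonoidAlgebra ℤ Q)
      (AddMonoidAlgebra.single p 1) = AddMonoidAlgebra.single (f p) 1 := fun p => by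
    show AddMonoidAlgebra.mapDomainRingHom ℤ f (AddMonoidAlgebra.single p 1) = _
    simp [AddMonoidAlgebra.mapDomainRingHom, Finsupp.mapDomain_single]
  have hmk : ∀ p : P, (QuotientAddGroup.mk' f.range (f p)) = 0 := fun p => by
    simpa using (QuotientAddGroup.eq_zero_iff (s := f.range) (f p)).mpr ⟨p, rfl⟩
  -- `S` := ℤ[Q] ⊗[ℤ] ℤ[Q/P], the target.  `T` := ℤ[Q] ⊗[ℤ[P]] ℤ[Q]
  letI : Algebra (AddMonoidAlgebra ℤ P) (TensorProduct ℤ (AddMonoidAlgebra ℤ Q)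
      (AddMonoidAlgebra ℤ (Q ⧸ f.range))) :=
    ((algebraMap (AddMonoidAlgebra ℤ Q) _).comp
      (algebraMap (AddMonoidAlgebra ℤ P) (AddMonoidAlgebra ℤ Q))).toAlgebra
  -- forward map on the left factor
  let φ₁ : AddMonoidAlgebra ℤ Q →ₐ[AddMonoidAlgebra ℤ P] (TensorProduct ℤ (AddMonoidAlgebra ℤ Q)
      (AddMonoidAlgebra ℤ (Q ⧸ f.range))) :=
    { toRingHom := Algebra.TensorProduct.includeLeftRingHom
      commutes' := fun r => rfl }
  -- forward map on the right factor, first as a monoid hom on group elements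
  let g : Multiplicative Q →* (TensorProduct ℤ (AddMonoidAlgebra ℤ Q)
      (AddMonoidAlgebra ℤ (Q ⧸ f.range))) :=
  { toFun := fun y => AddMonoidAlgebra.single y.toAdd 1 ⊗ₜ
      AddMonoidAlgebra.single (QuotientAddGroup.mk' f.range y.toAdd) 1
    map_one' := by
      simp [AddMonoidAlgebra.one_def]
      rfl
    map_mul' := fun a b => by
      simp [Algebra.TensorProduct.tmul_mul_tmul, AddMonoidAlgebra.single_mul_single] }
  let φ₂' : AddMonoidAlgebra ℤ Q →ₐ[ℤ] (TensorProduct ℤ (AddMonoidAlgebra ℤ Q)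
      (AddMonoidAlgebra ℤ (Q ⧸ f.range))) := AddMonoidAlgebra.lift ℤ _ Q g
  have hφ₂ : ∀ y : Q, φ₂' (AddMonoidAlgebra.single y 1) =
      AddMonoidAlgebra.single y 1 ⊗ₜ
        AddMonoidAlgebra.single (QuotientAddGroup.mk' f.range y) 1 := fun y => by
    simp [φ₂', g]
  -- upgrade φ₂' to a ℤ[P]-algebra hom
  have hcomm : (φ₂'.toRingHom.comp (algebraMap (AddMonoidAlgebra ℤ P) (AddMonoidAlgebra ℤ Q))) =
      (algebraMap (AddMonoidAlgebra ℤ P) (TensorProduct ℤ (AddMonoidAlgebra ℤ Q)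
        (AddMonoidAlgebra ℤ (Q ⧸ f.range)))) := by
    refine AddMonoidAlgebra.ringHom_ext (fun b => ?_) (fun p => ?_)
    · rw [show (AddMonoidAlgebra.single (0:P) b : AddMonoidAlgebra ℤ P) =
        ((b : ℤ) : AddMonoidAlgebra ℤ P) by rw [AddMonoidAlgebra.intCast_def, Int.cast_id],
        map_intCast, map_intCast]
    · show φ₂' (algebraMap _ _ (AddMonoidAlgebra.single p 1)) = _
      rw [halg, hφ₂, hmk]
      have hr : (algebraMap (AddMonoidAlgebra ℤ P) (TensorProduct ℤ (AddMonoidAlgebra ℤ Q)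
            (AddMonoidAlgebra ℤ (Q ⧸ f.range)))) (AddMonoidAlgebra.single p 1) =
          algebraMap (AddMonoidAlgebra ℤ Q) _
            (algebraMap (AddMonoidAlgebra ℤ P) (AddMonoidAlgebra ℤ Q)
              (AddMonoidAlgebra.single p 1)) := rfl
      rw [hr, halg]
      show _ = AddMonoidAlgebra.single (f p) 1 ⊗ₜ 1
      rw [AddMonoidAlgebra.one_def]
  let φ₂ : AddMonoidAlgebra ℤ Q →ₐ[AddMonoidAlgebra ℤ P] (TensorProduct ℤ (AddMonoidAlgebra ℤ Q)
      (AddMonoidAlgebra ℤ (Q ⧸ f.range))) :=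
    { toRingHom := φ₂'.toRingHom
      commutes' := fun r => RingHom.congr_fun hcomm r }
  -- the forward algebra hom
  let fwd := Algebra.TensorProduct.productMap φ₁ φ₂
  -- the backward map.  On the right factor, group elements of Q/P go to units of T.
  have key_smul : ∀ (p : P) (x : AddMonoidAlgebra ℤ Q),
      (AddMonoidAlgebra.single p 1 : AddMonoidAlgebra ℤ P) • x =
        AddMonoidAlgebra.single (f p) 1 * x := fun p x => by
    rw [Algebra.smul_def, halg]
  have hunit : ∀ y z : Q, y + z = 0 →
      ((AddMonoidAlgebra.single y (1:ℤ) : AddMonoidAlgebra ℤ Q) ⊗ₜ[AddMonoidAlgebra ℤ P]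
        (AddMonoidAlgebra.single (-y) (1:ℤ) : AddMonoidAlgebra ℤ Q)) *
      ((AddMonoidAlgebra.single z (1:ℤ) : AddMonoidAlgebra ℤ Q) ⊗ₜ
        (AddMonoidAlgebra.single (-z) (1:ℤ) : AddMonoidAlgebra ℤ Q)) = 1 := by
    intro y z h
    rw [Algebra.TensorProduct.tmul_mul_tmul, AddMonoidAlgebra.single_mul_single,
      AddMonoidAlgebra.single_mul_single, h, one_mul]
    rw [show -y + -z = -(y+z) by abel, h, neg_zero, ← AddMonoidAlgebra.one_def,
      Algebra.TensorProduct.one_def]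
  let u : Q →+ Additive (TensorProduct (AddMonoidAlgebra ℤ P)
      (AddMonoidAlgebra ℤ Q) (AddMonoidAlgebra ℤ Q))ˣ :=
  { toFun := fun y => Additive.ofMul (α := (TensorProduct (AddMonoidAlgebra ℤ P)
      (AddMonoidAlgebra ℤ Q) (AddMonoidAlgebra ℤ Q))ˣ)
      ⟨AddMonoidAlgebra.single (-y) 1 ⊗ₜ AddMonoidAlgebra.single y 1,
       AddMonoidAlgebra.single y 1 ⊗ₜ AddMonoidAlgebra.single (-y) 1,
       by simpa using hunit (-y) y (by abel),
       by simpa using hunit y (-y) (by abel)⟩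
    map_zero' := by
      refine Additive.toMul.injective (Units.ext ?_)
      show AddMonoidAlgebra.single (-(0:Q)) (1:ℤ) ⊗ₜ[AddMonoidAlgebra ℤ P]
        AddMonoidAlgebra.single (0:Q) (1:ℤ) = 1
      rw [neg_zero, ← AddMonoidAlgebra.one_def, Algebra.TensorProduct.one_def]
    map_add' := fun y z => by
      refine Additive.toMul.injective (Units.ext ?_)
      show AddMonoidAlgebra.single (-(y+z)) (1:ℤ) ⊗ₜ[AddMonoidAlgebra ℤ P]
          AddMonoidAlgebra.single (y+z) (1:ℤ) =
        (AddMonoidAlgebra.single (-y) 1 ⊗ₜ[AddMonoidAlgebra ℤ P] AddMonoidAlgebra.single y 1) *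
        (AddMonoidAlgebra.single (-z) 1 ⊗ₜ[AddMonoidAlgebra ℤ P] AddMonoidAlgebra.single z 1)
      rw [Algebra.TensorProduct.tmul_mul_tmul, AddMonoidAlgebra.single_mul_single,
        AddMonoidAlgebra.single_mul_single, one_mul]
      congr 2
      abel }
  have hker : f.range ≤ u.ker := by
    rintro q ⟨p, rfl⟩
    refine Additive.toMul.injective (Units.ext ?_)
    show AddMonoidAlgebra.single (-(f p)) (1:ℤ) ⊗ₜ[AddMonoidAlgebra ℤ P]
      AddMonoidAlgebra.single (f p) (1:ℤ) = 1
    have h1 : (AddMonoidAlgebra.single (f p) (1:ℤ) : AddMonoidAlgebra ℤ Q) =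
        (AddMonoidAlgebra.single p 1 : AddMonoidAlgebra ℤ P) • (1 : AddMonoidAlgebra ℤ Q) := by
      rw [key_smul, mul_one]
    rw [h1, ← smul_tmul, key_smul, AddMonoidAlgebra.single_mul_single, one_mul,
      add_neg_cancel, ← AddMonoidAlgebra.one_def, Algebra.TensorProduct.one_def]
  let g2 : Multiplicative (Q ⧸ f.range) →* (TensorProduct (AddMonoidAlgebra ℤ P)
      (AddMonoidAlgebra ℤ Q) (AddMonoidAlgebra ℤ Q)) :=
    (Units.coeHom _).comp (AddMonoidHom.toMultiplicativeLeft (QuotientAddGroup.lift f.range u hker))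
  let ψ₂ : AddMonoidAlgebra ℤ (Q ⧸ f.range) →ₐ[ℤ] (TensorProduct (AddMonoidAlgebra ℤ P)
      (AddMonoidAlgebra ℤ Q) (AddMonoidAlgebra ℤ Q)) :=
    AddMonoidAlgebra.lift ℤ _ (Q ⧸ f.range) g2
  have hψ₂ : ∀ y : Q, ψ₂ (AddMonoidAlgebra.single ((QuotientAddGroup.mk' f.range) y) 1) =
      AddMonoidAlgebra.single (-y) 1 ⊗ₜ AddMonoidAlgebra.single y 1 := fun y => by
    simp only [ψ₂, AddMonoidAlgebra.lift_single, one_smul]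
    rfl
  let ψ₁ : AddMonoidAlgebra ℤ Q →ₐ[ℤ] (TensorProduct (AddMonoidAlgebra ℤ P)
      (AddMonoidAlgebra ℤ Q) (AddMonoidAlgebra ℤ Q)) :=
    (Algebra.TensorProduct.includeLeftRingHom).toIntAlgHom
  let bwd := Algebra.TensorProduct.productMap ψ₁ ψ₂
  -- the two composites are the identity
  have key1 : ∀ b, fwd (ψ₂ b) = (1 : AddMonoidAlgebra ℤ Q) ⊗ₜ b := by
    have : (fwd.toRingHom.comp ψ₂.toRingHom) =
        (Algebra.TensorProduct.includeRight (R := ℤ)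
          (A := AddMonoidAlgebra ℤ Q)).toRingHom := by
      refine AddMonoidAlgebra.ringHom_ext (fun b => ?_) (fun a => ?_)
      · rw [show (AddMonoidAlgebra.single (0:Q ⧸ f.range) b : AddMonoidAlgebra ℤ (Q ⧸ f.range)) =
            ((b : ℤ) : AddMonoidAlgebra ℤ (Q ⧸ f.range)) by
              rw [AddMonoidAlgebra.intCast_def, Int.cast_id],
          map_intCast, map_intCast]
      · obtain ⟨y, rfl⟩ := QuotientAddGroup.mk'_surjective f.range a
        show fwd (ψ₂ _) = _
        rw [hψ₂]
        show fwd (_ ⊗ₜ _) = _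
        rw [Algebra.TensorProduct.productMap_apply_tmul]
        show Algebra.TensorProduct.includeLeftRingHom _ * φ₂' _ = _
        rw [hφ₂]
        show (AddMonoidAlgebra.single (-y) 1 ⊗ₜ 1) * _ = _
        rw [Algebra.TensorProduct.tmul_mul_tmul, AddMonoidAlgebra.single_mul_single,
          one_mul, neg_add_cancel, ← AddMonoidAlgebra.one_def, one_mul]
        rfl
    exact fun b => RingHom.congr_fun this b
  have key2 : ∀ y, bwd (φ₂' y) = (1 : AddMonoidAlgebra ℤ Q) ⊗ₜ y := by
    have : (bwd.toRingHom.comp φ₂'.toRingHom) =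
        Algebra.TensorProduct.includeRight.toRingHom := by
      refine AddMonoidAlgebra.ringHom_ext (fun b => ?_) (fun y => ?_)
      · rw [show (AddMonoidAlgebra.single (0:Q) b : AddMonoidAlgebra ℤ Q) =
            ((b : ℤ) : AddMonoidAlgebra ℤ Q) by
              rw [AddMonoidAlgebra.intCast_def, Int.cast_id],
          map_intCast, map_intCast]
      · show bwd (φ₂' _) = _
        rw [hφ₂]
        show bwd (_ ⊗ₜ _) = _
        rw [Algebra.TensorProduct.productMap_apply_tmul, hψ₂]
        show (AddMonoidAlgebra.single y 1 ⊗ₜ 1) * _ = _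
        rw [Algebra.TensorProduct.tmul_mul_tmul, AddMonoidAlgebra.single_mul_single,
          one_mul, add_neg_cancel, ← AddMonoidAlgebra.one_def, one_mul]
        rfl
    exact fun b => RingHom.congr_fun this b
  have h1 : fwd.toRingHom.comp bwd.toRingHom = RingHom.id _ := by
    refine RingHom.ext fun z => ?_
    induction z using TensorProduct.induction_on with
    | zero => simp
    | tmul x b =>
      show fwd (bwd (x ⊗ₜ b)) = x ⊗ₜ b
      rw [Algebra.TensorProduct.productMap_apply_tmul, map_mul, key1]
      show fwd (x ⊗ₜ 1) * _ = _
      rw [Algebra.TensorProduct.productMap_apply_tmul, map_one, mul_one]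
      show (x ⊗ₜ 1) * (1 ⊗ₜ b) = x ⊗ₜ b
      rw [Algebra.TensorProduct.tmul_mul_tmul, mul_one, one_mul]
    | add x y hx hy =>
      simp only [RingHom.coe_comp, Function.comp_apply, map_add, RingHom.id_apply] at hx hy ⊢
      rw [hx, hy]
  have h2 : bwd.toRingHom.comp fwd.toRingHom = RingHom.id _ := by
    refine RingHom.ext fun z => ?_
    induction z using TensorProduct.induction_on with
    | zero => simp
    | tmul x y =>
      show bwd (fwd (x ⊗ₜ y)) = x ⊗ₜ y
      rw [Algebra.TensorProduct.productMap_apply_tmul, map_mul]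
      have hx : bwd (φ₁ x) = x ⊗ₜ 1 := by
        show bwd (x ⊗ₜ 1) = x ⊗ₜ 1
        rw [Algebra.TensorProduct.productMap_apply_tmul, map_one, mul_one]; rfl
      have hy2 : bwd (φ₂ y) = (1 : AddMonoidAlgebra ℤ Q) ⊗ₜ y := key2 y
      rw [hx, hy2, Algebra.TensorProduct.tmul_mul_tmul, mul_one, one_mul]
    | add x y hx hy =>
      simp only [RingHom.coe_comp, Function.comp_apply, map_add, RingHom.id_apply] at hx hy ⊢
      rw [hx, hy]
  let e := RingEquiv.ofRingHom fwd.toRingHom bwd.toRingHom h1 h2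
  have he : ∀ x y : Q,
      e (AddMonoidAlgebra.single x 1 ⊗ₜ AddMonoidAlgebra.single y 1) =
        AddMonoidAlgebra.single (x + y) 1 ⊗ₜ
          AddMonoidAlgebra.single (QuotientAddGroup.mk' f.range y) 1 := by
    intro x y
    show fwd (_ ⊗ₜ _) = _
    rw [Algebra.TensorProduct.productMap_apply_tmul]
    show Algebra.TensorProduct.includeLeftRingHom _ * φ₂' _ = _
    rw [hφ₂]
    show (AddMonoidAlgebra.single x 1 ⊗ₜ 1) * _ = _
    rw [Algebra.TensorProduct.tmul_mul_tmul, AddMonoidAlgebra.single_mul_single, one_mul, one_mul]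
  refine ⟨e, he, fun hfin => ?_⟩
  -- transfer finiteness and freeness along e
  haveI : Finite (Q ⧸ f.range) := hfin
  haveI : Module.Finite ℤ (AddMonoidAlgebra ℤ (Q ⧸ f.range)) := by
    classical
    haveI := Fintype.ofFinite (Q ⧸ f.range)
    exact Module.Finite.of_basis
      (AddMonoidAlgebra.basis (Q ⧸ f.range) ℤ :
        Module.Basis (Q ⧸ f.range) ℤ (AddMonoidAlgebra ℤ (Q ⧸ f.range)))
  haveI : Module.Free ℤ (AddMonoidAlgebra ℤ (Q ⧸ f.range)) :=
    Module.Free.of_basis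
      (AddMonoidAlgebra.basis (Q ⧸ f.range) ℤ :
        Module.Basis (Q ⧸ f.range) ℤ (AddMonoidAlgebra ℤ (Q ⧸ f.range)))
  haveI hS1 : Module.Finite (AddMonoidAlgebra ℤ Q) (TensorProduct ℤ (AddMonoidAlgebra ℤ Q)
      (AddMonoidAlgebra ℤ (Q ⧸ f.range))) := inferInstance
  haveI hS2 : Module.Free (AddMonoidAlgebra ℤ Q) (TensorProduct ℤ (AddMonoidAlgebra ℤ Q)
      (AddMonoidAlgebra ℤ (Q ⧸ f.range))) := inferInstance
  -- e is ℤ[Q]-linear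
  let e' : (TensorProduct (AddMonoidAlgebra ℤ P) (AddMonoidAlgebra ℤ Q) (AddMonoidAlgebra ℤ Q))
      ≃ₐ[AddMonoidAlgebra ℤ Q] (TensorProduct ℤ (AddMonoidAlgebra ℤ Q)
        (AddMonoidAlgebra ℤ (Q ⧸ f.range))) :=
    AlgEquiv.ofRingEquiv (f := e) (fun x => by
      show fwd (x ⊗ₜ 1) = x ⊗ₜ 1
      rw [Algebra.TensorProduct.productMap_apply_tmul, map_one, mul_one]; rfl)
  exact ⟨Module.Finite.equiv e'.symm.toLinearEquiv, Module.Free.of_equiv e'.symm.toLinearEquiv⟩
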